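/- arXiv:1707.00840 — 4 statements merged into one kernel-verified Lean document; each statement's English description precedes it below -/
import Mathlib

section
/- For all real numbers $\nu \ge 0$ and $\lambda \ge 1$, one has $\frac{2}{\sqrt{2\lambda-1+\nu(\nu+2\lambda)}}\,\frac{\Gamma(\nu/2+1)}{\Gamma(\nu/2+\lambda)} \le \frac{\Gamma((\nu+1)/2)}{\Gamma((\nu+1)/2+\lambda)}$. -/
open Real Filter Topology

/-- From log-convexity of Gamma: `Γ(z+1/2) ≤ Γ(z) √z`. -/
lemma gamma_half_step {z : ℝ} (hz : 0 < z) :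
    Real.Gamma (z + 1/2) ≤ Real.Gamma z * Real.sqrt z := by
  have hg0 : 0 < Real.Gamma z := Real.Gamma_pos_of_pos hz
  have hg2 : 0 < Real.Gamma (z + 1/2) := Real.Gamma_pos_of_pos (by linarith)
  have hc := Real.convexOn_log_Gamma.2 (Set.mem_Ioi.mpr hz)
      (Set.mem_Ioi.mpr (by linarith : (0:ℝ) < z + 1)) (by norm_num : (0:ℝ) ≤ (1/2:ℝ))
      (by norm_num : (0:ℝ) ≤ (1/2:ℝ)) (by norm_num)
  simp only [Function.comp, smul_eq_mul] at hc
  rw [show (1/2 : ℝ) * z + (1/2 : ℝ) * (z+1) = z + 1/2 by ring] at hc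
  have hsq : Real.Gamma (z + 1/2) ^ 2 ≤ z * Real.Gamma z ^ 2 := by
    have hlog : Real.log (Real.Gamma (z+1/2) ^ 2) ≤ Real.log (z * Real.Gamma z ^ 2) := by
      rw [Real.log_pow, show z * Real.Gamma z ^ 2 = Real.Gamma z * (z * Real.Gamma z) by ring,
        Real.log_mul hg0.ne' (by positivity), ← Real.Gamma_add_one hz.ne']
      push_cast
      linarith
    exact (Real.log_le_log_iff (by positivity) (by positivity)).mp hlog
  calc Real.Gamma (z + 1/2) = Real.sqrt (Real.Gamma (z + 1/2) ^ 2) := (Real.sqrt_sq hg2.le).symm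
    _ ≤ Real.sqrt (z * Real.Gamma z ^ 2) := Real.sqrt_le_sqrt hsq
    _ = Real.Gamma z * Real.sqrt z := by
        rw [Real.sqrt_mul (le_of_lt hz), Real.sqrt_sq hg0.le]; ring

/-- Numeric core inequality. -/
lemma numeric_core {x y : ℝ} (hx : 1 ≤ x) (hxy : x ≤ y) :
    y * (x + 1/2) * Real.sqrt (y + 1/2) * Real.sqrt (x - 1/2) ≤
    (y + 1/2) * x * Real.sqrt (x + 1/2) * Real.sqrt (y - 1/2) := by
  have h1 : (0:ℝ) ≤ y + 1/2 := by linarith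
  have h2 : (0:ℝ) ≤ x - 1/2 := by linarith
  have h3 : (0:ℝ) ≤ x + 1/2 := by linarith
  have h4 : (0:ℝ) ≤ y - 1/2 := by linarith
  have hy0 : (0:ℝ) ≤ y := by linarith
  have hx0 : (0:ℝ) ≤ x := by linarith
  have lhs_eq : y * (x + 1/2) * Real.sqrt (y + 1/2) * Real.sqrt (x - 1/2)
      = Real.sqrt (y^2 * (x+1/2)^2 * ((y+1/2) * (x-1/2))) := by
    rw [Real.sqrt_mul (by positivity), Real.sqrt_mul (by positivity),
      Real.sqrt_sq hy0, Real.sqrt_sq h3, Real.sqrt_mul h1]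
    ring
  have rhs_eq : (y + 1/2) * x * Real.sqrt (x + 1/2) * Real.sqrt (y - 1/2)
      = Real.sqrt ((y+1/2)^2 * x^2 * ((x+1/2) * (y-1/2))) := by
    rw [Real.sqrt_mul (by positivity), Real.sqrt_mul (by positivity),
      Real.sqrt_sq h1, Real.sqrt_sq hx0, Real.sqrt_mul h3]
    ring
  rw [lhs_eq, rhs_eq]
  apply Real.sqrt_le_sqrt
  nlinarith [mul_nonneg (mul_nonneg h1 h3)
    (mul_nonneg (mul_nonneg (by linarith : (0:ℝ) ≤ y - x) (by linarith : (0:ℝ) ≤ y + x))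
      (by norm_num : (0:ℝ) ≤ (1/4:ℝ)))]

/-- Main induction. -/
lemma key_aux : ∀ n : ℕ, ∀ x y : ℝ, 1 ≤ x → x ≤ y →
    Real.Gamma (y + 1/2) * Real.Gamma x * Real.sqrt (x - 1/2) ≤
    Real.Gamma y * Real.Gamma (x + 1/2) * Real.sqrt (y - 1/2) *
      (1 + ((y - x + 1/2)/2) / (x + n)) := by
  intro n
  induction n with
  | zero =>
    intro x y hx hxy
    have hx0 : (0:ℝ) < x := by linarith
    have hy0 : (0:ℝ) < y := by linarith
    have hgx : 0 < Real.Gamma x := Real.Gamma_pos_of_pos hx0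
    have hgy : 0 < Real.Gamma y := Real.Gamma_pos_of_pos hy0
    have hgx2 : 0 < Real.Gamma (x + 1/2) := Real.Gamma_pos_of_pos (by linarith)
    have hgy2 : 0 < Real.Gamma (y + 1/2) := Real.Gamma_pos_of_pos (by linarith)
    have hA : Real.Gamma (y + 1/2) ≤ Real.Gamma y * Real.sqrt y := gamma_half_step hy0
    have hB : x * Real.Gamma x ≤ Real.Gamma (x + 1/2) * Real.sqrt (x + 1/2) := by
      have h := gamma_half_step (show (0:ℝ) < x + 1/2 by linarith)
      rw [show x + 1/2 + 1/2 = x + 1 by ring, Real.Gamma_add_one hx0.ne'] at h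
      exact h
    set c := (y - x + 1/2)/2 with hc
    have hc0 : 0 ≤ c := by rw [hc]; linarith
    have hAM : Real.sqrt y * Real.sqrt (x + 1/2) ≤ x + c := by
      rw [← Real.sqrt_mul hy0.le]
      have hsq : y * (x + 1/2) ≤ (x + c)^2 := by rw [hc]; nlinarith [sq_nonneg (y - x - 1/2)]
      calc Real.sqrt (y * (x+1/2)) ≤ Real.sqrt ((x+c)^2) := Real.sqrt_le_sqrt hsq
        _ = x + c := Real.sqrt_sq (by linarith)
    have hsx : Real.sqrt (x - 1/2) ≤ Real.sqrt (y - 1/2) := Real.sqrt_le_sqrt (by linarith)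
    have hsy : (0:ℝ) ≤ Real.sqrt (y - 1/2) := Real.sqrt_nonneg _
    have step2 : Real.Gamma (y + 1/2) * (x * Real.Gamma x) ≤
        Real.Gamma y * Real.Gamma (x + 1/2) * (x + c) := by
      calc Real.Gamma (y + 1/2) * (x * Real.Gamma x)
          ≤ (Real.Gamma y * Real.sqrt y) * (Real.Gamma (x + 1/2) * Real.sqrt (x + 1/2)) := by
            apply mul_le_mul hA hB (by positivity) (by positivity)
        _ = Real.Gamma y * Real.Gamma (x + 1/2) * (Real.sqrt y * Real.sqrt (x + 1/2)) := by ring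
        _ ≤ Real.Gamma y * Real.Gamma (x + 1/2) * (x + c) :=
            mul_le_mul_of_nonneg_left hAM (by positivity)
    have main : Real.Gamma (y + 1/2) * Real.Gamma x * Real.sqrt (x - 1/2) ≤
        Real.Gamma y * Real.Gamma (x + 1/2) * Real.sqrt (y - 1/2) * ((x + c)/x) := by
      have hxinv : (0:ℝ) ≤ x⁻¹ := by positivity
      calc Real.Gamma (y + 1/2) * Real.Gamma x * Real.sqrt (x - 1/2)
          ≤ Real.Gamma (y + 1/2) * Real.Gamma x * Real.sqrt (y - 1/2) :=
            mul_le_mul_of_nonneg_left hsx (by positivity)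
        _ = Real.Gamma (y + 1/2) * (x * Real.Gamma x) * (Real.sqrt (y - 1/2) * x⁻¹) := by
            field_simp
        _ ≤ Real.Gamma y * Real.Gamma (x + 1/2) * (x + c) * (Real.sqrt (y - 1/2) * x⁻¹) :=
            mul_le_mul_of_nonneg_right step2 (mul_nonneg hsy hxinv)
        _ = Real.Gamma y * Real.Gamma (x + 1/2) * Real.sqrt (y - 1/2) * ((x + c)/x) := by
            field_simp
    have heq : (x + c)/x = 1 + c / (x + ((0:ℕ):ℝ)) := by
      push_cast
      field_simp
      ring
    rwa [heq] at main
  | succ n ih =>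
    intro x y hx hxy
    have hx0 : (0:ℝ) < x := by linarith
    have hy0 : (0:ℝ) < y := by linarith
    have hgx : 0 < Real.Gamma x := Real.Gamma_pos_of_pos hx0
    have hgy : 0 < Real.Gamma y := Real.Gamma_pos_of_pos hy0
    have hgx2 : 0 < Real.Gamma (x + 1/2) := Real.Gamma_pos_of_pos (by linarith)
    have hgy2 : 0 < Real.Gamma (y + 1/2) := Real.Gamma_pos_of_pos (by linarith)
    have ihs := ih (x+1) (y+1) (by linarith) (by linarith)
    rw [show y + 1 + 1/2 = (y + 1/2) + 1 by ring, show x + 1 + 1/2 = (x + 1/2) + 1 by ring,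
      Real.Gamma_add_one hx0.ne', Real.Gamma_add_one hy0.ne',
      Real.Gamma_add_one (show (x + 1/2 : ℝ) ≠ 0 by positivity),
      Real.Gamma_add_one (show (y + 1/2 : ℝ) ≠ 0 by positivity),
      show x + 1 - 1/2 = x + 1/2 by ring, show y + 1 - 1/2 = y + 1/2 by ring,
      show y + 1 - (x+1) + 1/2 = y - x + 1/2 by ring] at ihs
    -- ihs : (y+1/2)*Γ(y+1/2) * (x*Γx) * √(x+1/2) ≤ y*Γy * ((x+1/2)*Γ(x+1/2)) * √(y+1/2) * K
    set K := 1 + ((y - x + 1/2)/2) / (x + 1 + (n:ℝ)) with hK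
    have hK0 : 0 ≤ K := by
      have : 0 ≤ ((y - x + 1/2)/2) / (x + 1 + (n:ℝ)) := by
        apply div_nonneg (by linarith)
        positivity
      rw [hK]; linarith
    have hcast : x + ((n+1:ℕ):ℝ) = x + 1 + (n:ℝ) := by push_cast; ring
    rw [hcast]
    have hP : (0:ℝ) < (y+1/2) * x * Real.sqrt (x+1/2) := by positivity
    apply le_of_mul_le_mul_left _ hP
    calc ((y+1/2) * x * Real.sqrt (x+1/2)) *
          (Real.Gamma (y + 1/2) * Real.Gamma x * Real.sqrt (x - 1/2))
        = ((y+1/2) * Real.Gamma (y+1/2) * (x * Real.Gamma x) * Real.sqrt (x+1/2)) *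
            Real.sqrt (x - 1/2) := by ring
      _ ≤ (y * Real.Gamma y * ((x+1/2) * Real.Gamma (x+1/2)) * Real.sqrt (y+1/2) * K) *
            Real.sqrt (x - 1/2) :=
          mul_le_mul_of_nonneg_right ihs (Real.sqrt_nonneg _)
      _ = (y * (x+1/2) * Real.sqrt (y+1/2) * Real.sqrt (x-1/2)) *
            (Real.Gamma y * Real.Gamma (x+1/2) * K) := by ring
      _ ≤ ((y+1/2) * x * Real.sqrt (x+1/2) * Real.sqrt (y-1/2)) *
            (Real.Gamma y * Real.Gamma (x+1/2) * K) :=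
          mul_le_mul_of_nonneg_right (numeric_core hx hxy) (by positivity)
      _ = ((y+1/2) * x * Real.sqrt (x+1/2)) *
            (Real.Gamma y * Real.Gamma (x+1/2) * Real.sqrt (y - 1/2) * K) := by ring

/-- Key lemma, by taking the limit. -/
lemma key_lemma {x y : ℝ} (hx : 1 ≤ x) (hxy : x ≤ y) :
    Real.Gamma (y + 1/2) * Real.Gamma x * Real.sqrt (x - 1/2) ≤
    Real.Gamma y * Real.Gamma (x + 1/2) * Real.sqrt (y - 1/2) := by
  set R := Real.Gamma y * Real.Gamma (x + 1/2) * Real.sqrt (y - 1/2) with hR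
  have h1 : Tendsto (fun n : ℕ => x + (n:ℝ)) atTop atTop :=
    tendsto_atTop_add_const_left _ x tendsto_natCast_atTop_atTop
  have h2 : Tendsto (fun n : ℕ => ((y - x + 1/2)/2) / (x + (n:ℝ))) atTop (𝓝 0) :=
    h1.const_div_atTop _
  have h3 : Tendsto (fun n : ℕ => R * (1 + ((y - x + 1/2)/2) / (x + (n:ℝ)))) atTop (𝓝 R) := by
    have := (h2.const_add 1).const_mul R
    simpa using this
  exact ge_of_tendsto h3 (Eventually.of_forall fun n => key_aux n x y hx hxy)

theorem stmt_0 (ν l : ℝ) (hν : 0 ≤ ν) (hl : 1 ≤ l) :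
    2 / Real.sqrt (2 * l - 1 + ν * (ν + 2 * l)) *
      (Real.Gamma (ν / 2 + 1) / Real.Gamma (ν / 2 + l)) ≤
    Real.Gamma ((ν + 1) / 2) / Real.Gamma ((ν + 1) / 2 + l) := by
  set x := ν/2 + 1 with hxdef
  set y := ν/2 + l with hydef
  have hx : 1 ≤ x := by rw [hxdef]; linarith
  have hxy : x ≤ y := by rw [hxdef, hydef]; linarith
  set s := (ν+1)/2 with hsdef
  have hs0 : 0 < s := by rw [hsdef]; linarith
  have hss : Real.sqrt s * Real.sqrt s = s := Real.mul_self_sqrt hs0.le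
  have hy2 : 0 < y - 1/2 := by rw [hydef]; linarith
  have hgs : 0 < Real.Gamma s := Real.Gamma_pos_of_pos hs0
  have hgy : 0 < Real.Gamma y := Real.Gamma_pos_of_pos (by rw [hydef]; linarith)
  have hgy2 : 0 < Real.Gamma (y + 1/2) := Real.Gamma_pos_of_pos (by rw [hydef]; linarith)
  have hgx : 0 < Real.Gamma x := Real.Gamma_pos_of_pos (by rw [hxdef]; linarith)
  have hsqs : 0 < Real.sqrt s := Real.sqrt_pos.mpr hs0
  have hsqy : 0 < Real.sqrt (y - 1/2) := Real.sqrt_pos.mpr hy2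
  -- Gamma (x+1/2) = s * Gamma s
  have hGx2 : Real.Gamma (x + 1/2) = s * Real.Gamma s := by
    rw [show x + 1/2 = s + 1 by rw [hxdef, hsdef]; ring, Real.Gamma_add_one hs0.ne']
  have hkey := key_lemma hx hxy
  rw [hGx2, show x - 1/2 = s by rw [hxdef, hsdef]; ring] at hkey
  -- hkey : Γ(y+1/2) * Γ(x) * √s ≤ Γ(y) * (s * Γ(s)) * √(y-1/2)
  have hmain : Real.Gamma x * Real.Gamma (y + 1/2) ≤
      Real.Gamma s * (Real.sqrt s * Real.sqrt (y - 1/2) * Real.Gamma y) := by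
    apply le_of_mul_le_mul_right _ hsqs
    calc Real.Gamma x * Real.Gamma (y + 1/2) * Real.sqrt s
        = Real.Gamma (y + 1/2) * Real.Gamma x * Real.sqrt s := by ring
      _ ≤ Real.Gamma y * (s * Real.Gamma s) * Real.sqrt (y - 1/2) := hkey
      _ = Real.Gamma s * (Real.sqrt s * Real.sqrt (y - 1/2) * Real.Gamma y) * Real.sqrt s := by
          rw [show Real.Gamma s * (Real.sqrt s * Real.sqrt (y - 1/2) * Real.Gamma y) *
            Real.sqrt s = Real.Gamma y * ((Real.sqrt s * Real.sqrt s) * Real.Gamma s) *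
            Real.sqrt (y - 1/2) by ring, hss]
  -- compute the sqrt of D
  have hD : 2 * l - 1 + ν * (ν + 2 * l) = (2 * Real.sqrt s * Real.sqrt (y - 1/2))^2 := by
    have : (2 * Real.sqrt s * Real.sqrt (y - 1/2))^2 = 4 * (Real.sqrt s * Real.sqrt s) *
        (Real.sqrt (y - 1/2) * Real.sqrt (y - 1/2)) := by ring
    rw [this, hss, Real.mul_self_sqrt hy2.le, hsdef, hydef]
    ring
  have hsqrtD : Real.sqrt (2 * l - 1 + ν * (ν + 2 * l)) =
      2 * Real.sqrt s * Real.sqrt (y - 1/2) := by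
    rw [hD, Real.sqrt_sq (by positivity)]
  rw [hsqrtD]
  have hnu1 : Real.Gamma ((ν + 1) / 2) = Real.Gamma s := by rw [hsdef]
  have hnu2 : Real.Gamma ((ν + 1) / 2 + l) = Real.Gamma (y + 1/2) := by
    rw [show (ν + 1) / 2 + l = y + 1/2 by rw [hydef]; ring]
  have hgl : Real.Gamma (ν / 2 + 1) = Real.Gamma x := by rw [hxdef]
  have hgl2 : Real.Gamma (ν / 2 + l) = Real.Gamma y := by rw [hydef]
  rw [hnu1, hnu2, hgl, hgl2]
  rw [div_mul_div_comm, div_le_div_iff₀ (by positivity) hgy2]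
  calc 2 * Real.Gamma x * Real.Gamma (y + 1/2)
      ≤ 2 * (Real.Gamma s * (Real.sqrt s * Real.sqrt (y - 1/2) * Real.Gamma y)) := by
        rw [mul_assoc]
        exact mul_le_mul_of_nonneg_left hmain (by norm_num)
    _ = Real.Gamma s * (2 * Real.sqrt s * Real.sqrt (y - 1/2) * Real.Gamma y) := by ring
end

section
/- Let $m \ge 1$ be an integer and let $n \ge m$ be an integer with $n - m$ even and $n > m$. Then $\frac{1}{\sqrt{n^2-m^2}}\,\prod_{j=0}^{m-1} \frac{1}{n-m+2j+1} \le \prod_{j=0}^{m} \frac{1}{n-m+2j}$. -/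
theorem stmt_2 (m n : ℕ) (hm : 1 ≤ m) (hmn : m < n) (heven : Even (n - m)) :
    (1 / Real.sqrt ((n : ℝ) ^ 2 - (m : ℝ) ^ 2)) *
      ∏ j ∈ Finset.range m, (1 / ((n : ℝ) - m + 2 * j + 1)) ≤
    ∏ j ∈ Finset.range (m + 1), (1 / ((n : ℝ) - m + 2 * j)) := by
  have hn : (m : ℝ) + 1 ≤ n := by exact_mod_cast hmn
  set a : ℝ := (n : ℝ) - m with ha
  have ha1 : 1 ≤ a := by simp only [ha]; linarith
  have hP : (0:ℝ) < ∏ j ∈ Finset.range (m+1), (a + 2 * (j:ℝ)) :=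
    Finset.prod_pos fun j _ => by have := Nat.cast_nonneg (α := ℝ) j; linarith
  have hQ : (0:ℝ) < ∏ j ∈ Finset.range m, (a + 2 * (j:ℝ) + 1) :=
    Finset.prod_pos fun j _ => by have := Nat.cast_nonneg (α := ℝ) j; linarith
  have hnm : (0:ℝ) < a * (a + 2 * m) := by
    have := Nat.cast_nonneg (α := ℝ) m; positivity
  have hsq : (n:ℝ)^2 - (m:ℝ)^2 = a * (a + 2*m) := by simp only [ha]; ring
  -- key squared inequality
  have e1 : ∏ j ∈ Finset.range (m+1), (a + 2 * (j:ℝ))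
      = a * ∏ j ∈ Finset.range m, (a + 2*(j:ℝ) + 2) := by
    rw [Finset.prod_range_succ']
    have h : ∀ x ∈ Finset.range m, a + 2 * ((x:ℝ) + 1) = a + 2*(x:ℝ) + 2 :=
      fun x _ => by ring
    push_cast
    rw [Finset.prod_congr rfl h]
    ring
  have hPP : (∏ j ∈ Finset.range (m+1), (a + 2 * (j:ℝ))) ^ 2
      = (a * (a + 2*m)) * ∏ j ∈ Finset.range m, ((a + 2*(j:ℝ)) * (a + 2*(j:ℝ) + 2)) := by
    rw [sq]
    nth_rewrite 1 [Finset.prod_range_succ]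
    rw [e1]
    conv_rhs => rw [Finset.prod_mul_distrib]
    ring
  have hterm : ∏ j ∈ Finset.range m, ((a + 2*(j:ℝ)) * (a + 2*(j:ℝ) + 2))
      ≤ ∏ j ∈ Finset.range m, (a + 2*(j:ℝ) + 1)^2 := by
    apply Finset.prod_le_prod
    · intro j _
      have := Nat.cast_nonneg (α := ℝ) j
      positivity
    · intro j _
      nlinarith [Nat.cast_nonneg (α := ℝ) j]
  have hkey : (∏ j ∈ Finset.range (m+1), (a + 2 * (j:ℝ))) ^ 2
      ≤ (a * (a + 2*m)) * (∏ j ∈ Finset.range m, (a + 2*(j:ℝ) + 1)) ^ 2 := by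
    rw [hPP, ← Finset.prod_pow]
    exact mul_le_mul_of_nonneg_left hterm hnm.le
  -- take square roots
  have hle : ∏ j ∈ Finset.range (m+1), (a + 2 * (j:ℝ))
      ≤ Real.sqrt ((n:ℝ)^2 - (m:ℝ)^2) * ∏ j ∈ Finset.range m, (a + 2*(j:ℝ) + 1) := by
    have h1 := Real.sqrt_le_sqrt hkey
    rwa [Real.sqrt_sq hP.le, Real.sqrt_mul hnm.le, Real.sqrt_sq hQ.le, ← hsq] at h1
  have hS : 0 < Real.sqrt ((n:ℝ)^2 - (m:ℝ)^2) := by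
    rw [hsq]; exact Real.sqrt_pos.mpr hnm
  calc (1 / Real.sqrt ((n : ℝ) ^ 2 - (m : ℝ) ^ 2)) *
        ∏ j ∈ Finset.range m, (1 / (a + 2 * (j:ℝ) + 1))
      = (Real.sqrt ((n:ℝ)^2 - (m:ℝ)^2) * ∏ j ∈ Finset.range m, (a + 2*(j:ℝ) + 1))⁻¹ := by
        rw [Finset.prod_div_distrib, Finset.prod_const_one, mul_inv]
        simp [one_div]
    _ ≤ (∏ j ∈ Finset.range (m+1), (a + 2 * (j:ℝ)))⁻¹ := by
        apply inv_anti₀ hP hle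
    _ = ∏ j ∈ Finset.range (m + 1), (1 / (a + 2 * (j:ℝ))) := by
        rw [Finset.prod_div_distrib, Finset.prod_const_one, one_div]
end

section
/- For real numbers $\sigma \ge 1$ and $n > \sigma$, one has $\left(\frac{\Gamma((n-\sigma+1)/2)}{\Gamma((n+\sigma+1)/2)}\right)^2 \le 2^{2\sigma}\,\frac{\Gamma(n-\sigma)}{\Gamma(n+\sigma)}$. -/
open Real Set

lemma key_mono {x y : ℝ} (hx : 0 < x) (hxy : x ≤ y) :
    Real.Gamma (x + 1/2) * Real.Gamma y ≤ Real.Gamma x * Real.Gamma (y + 1/2) := by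
  have hy : 0 < y := lt_of_lt_of_le hx hxy
  rcases eq_or_lt_of_le hxy with rfl | hlt
  · rw [mul_comm]
  have hf := Real.convexOn_log_Gamma
  set f : ℝ → ℝ := Real.log ∘ Real.Gamma with hfdef
  have hxm : x ∈ Ioi (0:ℝ) := hx
  have hym : y ∈ Ioi (0:ℝ) := hy
  have hx2 : x + 1/2 ∈ Ioi (0:ℝ) := by simp only [mem_Ioi]; linarith
  have hy2 : y + 1/2 ∈ Ioi (0:ℝ) := by simp only [mem_Ioi]; linarith
  have h1 : (f (x + 1/2) - f x) / ((x + 1/2) - x) ≤ (f (y + 1/2) - f x) / ((y + 1/2) - x) :=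
    hf.secant_mono hxm hx2 hy2 (by linarith) (by linarith) (by linarith)
  have h2 : (f x - f (y + 1/2)) / (x - (y + 1/2)) ≤ (f y - f (y + 1/2)) / (y - (y + 1/2)) :=
    hf.secant_mono hy2 hxm hym (by intro h; linarith) (by intro h; linarith) hxy
  have e1 : (f (y + 1/2) - f x) / ((y + 1/2) - x) = (f x - f (y + 1/2)) / (x - (y + 1/2)) := by
    rw [← neg_div_neg_eq, neg_sub, neg_sub]
  have e2 : (f (y + 1/2) - f y) / ((y + 1/2) - y) = (f y - f (y + 1/2)) / (y - (y + 1/2)) := by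
    rw [← neg_div_neg_eq, neg_sub, neg_sub]
  have h3 : (f (x + 1/2) - f x) / ((x + 1/2) - x) ≤ (f (y + 1/2) - f y) / ((y + 1/2) - y) := by
    rw [e2]; exact h1.trans (e1 ▸ h2)
  have hkey : f (x + 1/2) - f x ≤ f (y + 1/2) - f y := by
    have hx2x : (x + 1/2) - x = (1:ℝ)/2 := by ring
    have hy2y : (y + 1/2) - y = (1:ℝ)/2 := by ring
    rw [hx2x, hy2y, div_le_div_iff₀ (by norm_num) (by norm_num)] at h3
    linarith
  have hGx := Real.Gamma_pos_of_pos hx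
  have hGy := Real.Gamma_pos_of_pos hy
  have hGx2 := Real.Gamma_pos_of_pos (show (0:ℝ) < x + 1/2 by linarith)
  have hGy2 := Real.Gamma_pos_of_pos (show (0:ℝ) < y + 1/2 by linarith)
  have : Real.log (Real.Gamma (x + 1/2) * Real.Gamma y) ≤
      Real.log (Real.Gamma x * Real.Gamma (y + 1/2)) := by
    rw [Real.log_mul hGx2.ne' hGy.ne', Real.log_mul hGx.ne' hGy2.ne']
    have : f (x + 1/2) = Real.log (Real.Gamma (x + 1/2)) := rfl
    simp only [hfdef, Function.comp] at hkey
    linarith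
  exact (Real.log_le_log_iff (by positivity) (by positivity)).mp this

theorem stmt_4 (σ n : ℝ) (hσ : 1 ≤ σ) (hn : σ < n) :
    (Real.Gamma ((n - σ + 1) / 2) / Real.Gamma ((n + σ + 1) / 2)) ^ 2 ≤
      2 ^ (2 * σ) * (Real.Gamma (n - σ) / Real.Gamma (n + σ)) := by
  set x := (n - σ) / 2 with hxdef
  set y := (n + σ) / 2 with hydef
  have hx : 0 < x := by simp [hxdef]; linarith
  have hy : 0 < y := by simp [hydef]; linarith
  have hxy : x ≤ y := by simp [hxdef, hydef]; linarith
  have hdx := Real.Gamma_mul_Gamma_add_half x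
  have hdy := Real.Gamma_mul_Gamma_add_half y
  have h2x : 2 * x = n - σ := by rw [hxdef]; ring
  have h2y : 2 * y = n + σ := by rw [hydef]; ring
  rw [h2x] at hdx
  rw [h2y] at hdy
  have hGx := Real.Gamma_pos_of_pos hx
  have hGy := Real.Gamma_pos_of_pos hy
  have hGx2 := Real.Gamma_pos_of_pos (show (0:ℝ) < x + 1/2 by linarith)
  have hGy2 := Real.Gamma_pos_of_pos (show (0:ℝ) < y + 1/2 by linarith)
  have hGnx : 0 < Real.Gamma (n - σ) := Real.Gamma_pos_of_pos (by linarith)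
  have hGny : 0 < Real.Gamma (n + σ) := Real.Gamma_pos_of_pos (by linarith)
  have hπ : (0:ℝ) < √π := Real.sqrt_pos.mpr Real.pi_pos
  have hax : (n - σ + 1) / 2 = x + 1/2 := by rw [hxdef]; ring
  have hay : (n + σ + 1) / 2 = y + 1/2 := by rw [hydef]; ring
  rw [hax, hay]
  -- RHS equals Γ(x)Γ(x+1/2)/(Γ(y)Γ(y+1/2))
  have hpow : (0:ℝ) < (2:ℝ) ^ (1 - 2*x) := Real.rpow_pos_of_pos two_pos _
  have hpow' : (0:ℝ) < (2:ℝ) ^ (1 - 2*y) := Real.rpow_pos_of_pos two_pos _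
  have hfact : (2:ℝ) ^ (2*σ) * (2:ℝ) ^ (1 - (n + σ)) = (2:ℝ) ^ (1 - (n - σ)) := by
    rw [← Real.rpow_add two_pos]; congr 1; ring
  have hpa : (0:ℝ) < (2:ℝ) ^ (1 - (n - σ)) := Real.rpow_pos_of_pos two_pos _
  have hpb : (0:ℝ) < (2:ℝ) ^ (1 - (n + σ)) := Real.rpow_pos_of_pos two_pos _
  have hrhs : (2:ℝ) ^ (2 * σ) * (Real.Gamma (n - σ) / Real.Gamma (n + σ)) =
      (Real.Gamma x * Real.Gamma (x + 1/2)) / (Real.Gamma y * Real.Gamma (y + 1/2)) := by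
    rw [hdx, hdy]
    field_simp
    linear_combination hfact
  rw [hrhs]
  have hkey := key_mono hx hxy
  -- (Γ(x+1/2)/Γ(y+1/2))^2 ≤ Γ(x)Γ(x+1/2)/(Γ(y)Γ(y+1/2))
  rw [div_pow, div_le_div_iff₀ (by positivity) (by positivity)]
  have h1 : Real.Gamma (x + 1/2) / Real.Gamma (y + 1/2) ≤ Real.Gamma x / Real.Gamma y := by
    rw [div_le_div_iff₀ hGy2 hGy]
    linarith [hkey]
  nlinarith [mul_le_mul_of_nonneg_left hkey (le_of_lt hGx2), sq_nonneg (Real.Gamma (x+1/2)),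
    mul_le_mul_of_nonneg_left hkey (le_of_lt hGy2)]
end

section
/- Let $a,b,c$ be real with $c > 0$, $c$ not a non-positive integer, and $c - a - b > 0$. Then the series ${}_2F_1(a,b;c;z) = \sum_{j=0}^\infty \frac{(a)_j(b)_j}{(c)_j\,j!} z^j$ converges at $z = 1$ and ${}_2F_1(a,b;c;1) = \frac{\Gamma(c)\Gamma(c-a-b)}{\Gamma(c-a)\Gamma(c-b)}$, where Gamma values at negative non-integer arguments are defined via the reflection formula. -/
/-- The rising factorial (Pochhammer symbol) `(a)_j`. -/
noncomputable def poch (a : ℝ) (j : ℕ) : ℝ := ∏ i ∈ Finset.range j, (a + i)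

lemma poch_zero (a : ℝ) : poch a 0 = 1 := rfl

lemma poch_succ (a : ℝ) (j : ℕ) : poch a (j+1) = poch a j * (a + j) :=
  Finset.prod_range_succ _ _

lemma poch_succ' (a : ℝ) (j : ℕ) : poch a (j+1) = a * poch (a+1) j := by
  rw [poch, Finset.prod_range_succ']
  simp only [Nat.cast_zero, add_zero, poch]
  rw [mul_comm]
  congr 1
  apply Finset.prod_congr rfl
  intro i _
  push_cast
  ring

lemma poch_nonneg {a : ℝ} (ha : 0 ≤ a) (j : ℕ) : 0 ≤ poch a j :=
  Finset.prod_nonneg fun i _ => by positivity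

lemma poch_pos {a : ℝ} (ha : 0 < a) (j : ℕ) : 0 < poch a j :=
  Finset.prod_pos fun i _ => by positivity

lemma abs_poch_le (a : ℝ) (j : ℕ) : |poch a j| ≤ poch |a| j := by
  rw [poch, poch, Finset.abs_prod]
  apply Finset.prod_le_prod (fun i _ => abs_nonneg _)
  intro i _
  calc |a + (i:ℝ)| ≤ |a| + |(i:ℝ)| := abs_add_le _ _
    _ = |a| + i := by rw [Nat.abs_cast]

lemma gammaSeq_eq (s : ℝ) (n : ℕ) :
    Real.GammaSeq s n = (n:ℝ) ^ s * n.factorial / poch s (n+1) := rfl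

lemma poch_eq_gammaSeq {s : ℝ} {n : ℕ} (hn : 1 ≤ n) (hs : poch s (n+1) ≠ 0) :
    poch s (n+1) = (n:ℝ) ^ s * n.factorial / Real.GammaSeq s n := by
  have hn0 : (0:ℝ) < n := by exact_mod_cast hn
  have h1 : (n:ℝ) ^ s * n.factorial ≠ 0 := by positivity
  rw [gammaSeq_eq]
  field_simp

lemma gammaSeq_ne_zero {s : ℝ} {n : ℕ} (hn : 1 ≤ n) (hs : poch s (n+1) ≠ 0) :
    Real.GammaSeq s n ≠ 0 := by
  have hn0 : (0:ℝ) < n := by exact_mod_cast hn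
  rw [gammaSeq_eq]
  have h1 : (n:ℝ) ^ s * n.factorial ≠ 0 := by positivity
  exact div_ne_zero h1 hs

lemma key (a b c : ℝ) (hc : 0 < c) {n : ℕ} (hn : 1 ≤ n)
    (ha : poch a (n+1) ≠ 0) (hb : poch b (n+1) ≠ 0) :
    poch a (n+1) * poch b (n+1) / (poch c (n+1) * ((n+1).factorial : ℝ)) =
      (n:ℝ) ^ (a + b - c) / (n+1) *
        (Real.GammaSeq c n / (Real.GammaSeq a n * Real.GammaSeq b n)) := by
  have hn0 : (0:ℝ) < n := by exact_mod_cast hn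
  have hcp := (poch_pos hc (n+1)).ne'
  have hga := gammaSeq_ne_zero hn ha
  have hgb := gammaSeq_ne_zero hn hb
  have hgc := gammaSeq_ne_zero hn hcp
  have hf : (n.factorial : ℝ) ≠ 0 := by positivity
  rw [poch_eq_gammaSeq hn ha, poch_eq_gammaSeq hn hb, poch_eq_gammaSeq hn hcp]
  rw [Nat.factorial_succ]
  have habc : (n:ℝ) ^ (a + b - c) = (n:ℝ)^a * (n:ℝ)^b / (n:ℝ)^c := by
    rw [← Real.rpow_add hn0, ← Real.rpow_sub hn0]
  rw [habc]
  have hna : (n:ℝ)^a ≠ 0 := by positivity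
  have hnb : (n:ℝ)^b ≠ 0 := by positivity
  have hnc : (n:ℝ)^c ≠ 0 := by positivity
  have hn1 : ((n:ℝ)+1) ≠ 0 := by positivity
  field_simp
  push_cast
  ring

lemma poch_eq_zero_of_le {a : ℝ} {j k : ℕ} (h : poch a j = 0) (hjk : j ≤ k) :
    poch a k = 0 := by
  induction k with
  | zero => simpa [Nat.le_zero.mp hjk] using h
  | succ k ih =>
    rcases Nat.lt_or_ge j (k+1) with h' | h'
    · rw [poch_succ, ih (Nat.lt_succ_iff.mp h'), zero_mul]
    · have : j = k + 1 := le_antisymm hjk h'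
      rwa [← this]

lemma gamma_ne_zero_of_poch {a : ℝ} (ha : ∀ j, poch a j ≠ 0) : Real.Gamma a ≠ 0 := by
  apply Real.Gamma_ne_zero
  intro m hm
  apply ha (m+1)
  apply Finset.prod_eq_zero (Finset.self_mem_range_succ m)
  rw [hm]; ring

lemma summable_F (a b c : ℝ) (hc : 0 < c) (h : 0 < c - a - b) :
    Summable (fun j : ℕ => poch a j * poch b j / (poch c j * (Nat.factorial j))) := by
  by_cases hz : ∃ j, poch a j * poch b j = 0
  · obtain ⟨j0, hj0⟩ := hz
    apply summable_of_ne_finset_zero (s := Finset.range j0)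
    intro k hk
    have hk' : j0 ≤ k := by simpa using hk
    rcases mul_eq_zero.mp hj0 with h1 | h1
    · rw [poch_eq_zero_of_le h1 hk', zero_mul, zero_div]
    · rw [poch_eq_zero_of_le h1 hk', mul_zero, zero_div]
  · push_neg at hz
    have ha : ∀ j, poch a j ≠ 0 := fun j hj => hz j (by rw [hj, zero_mul])
    have hb : ∀ j, poch b j ≠ 0 := fun j hj => hz j (by rw [hj, mul_zero])
    rw [← summable_nat_add_iff 1]
    set L := Real.Gamma c / (Real.Gamma a * Real.Gamma b) with hL
    have hQ : Filter.Tendsto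
        (fun n => Real.GammaSeq c n / (Real.GammaSeq a n * Real.GammaSeq b n))
        Filter.atTop (nhds L) := by
      exact (Real.GammaSeq_tendsto_Gamma c).div
        ((Real.GammaSeq_tendsto_Gamma a).mul (Real.GammaSeq_tendsto_Gamma b))
        (mul_ne_zero (gamma_ne_zero_of_poch ha) (gamma_ne_zero_of_poch hb))
    have hbound : ∀ᶠ n in Filter.atTop,
        ‖poch a (n+1) * poch b (n+1) / (poch c (n+1) * ((n+1).factorial : ℝ))‖ ≤
          (|L| + 1) * (n:ℝ) ^ (a + b - c - 1) := by
      have habs : Filter.Tendsto (fun n => |Real.GammaSeq c n /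
          (Real.GammaSeq a n * Real.GammaSeq b n)|) Filter.atTop (nhds |L|) := hQ.abs
      have hev := habs.eventually_le_const (show |L| < |L| + 1 by linarith)
      filter_upwards [hev, Filter.eventually_ge_atTop 1] with n hQn hn
      have hn0 : (0:ℝ) < n := by exact_mod_cast hn
      rw [key a b c hc hn (ha _) (hb _)]
      rw [Real.norm_eq_abs, abs_mul, abs_div]
      have h1 : |(n:ℝ) ^ (a+b-c)| = (n:ℝ)^(a+b-c) := abs_of_nonneg (by positivity)
      have h2 : |(n:ℝ) + 1| = (n:ℝ) + 1 := abs_of_nonneg (by positivity)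
      rw [h1, h2]
      have h3 : (n:ℝ) ^ (a+b-c) / ((n:ℝ)+1) ≤ (n:ℝ) ^ (a+b-c-1) := by
        rw [Real.rpow_sub hn0 (a+b-c) 1, Real.rpow_one]
        apply div_le_div_of_nonneg_left (by positivity) hn0 (by linarith)
      calc (n:ℝ) ^ (a+b-c) / ((n:ℝ)+1) * |_root_.Real.GammaSeq c n /
            (Real.GammaSeq a n * Real.GammaSeq b n)|
          ≤ (n:ℝ) ^ (a+b-c-1) * (|L| + 1) := by
            apply mul_le_mul h3 hQn (abs_nonneg _) (by positivity)
        _ = (|L| + 1) * (n:ℝ) ^ (a+b-c-1) := mul_comm _ _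
    exact Summable.of_norm_bounded_eventually_nat
      ((Real.summable_nat_rpow.mpr (by linarith)).mul_left (|L| + 1)) hbound

lemma tendsto_H (a b c : ℝ) (hc : 0 < c) (h : 0 < c - a - b) :
    Filter.Tendsto
      (fun j : ℕ => poch a j * poch b j * (j * (c + j)) / (poch (c+1) j * (Nat.factorial j)))
      Filter.atTop (nhds 0) := by
  by_cases hz : ∃ j, poch a j * poch b j = 0
  · obtain ⟨j0, hj0⟩ := hz
    apply Filter.Tendsto.congr' (f₁ := fun _ => (0:ℝ))
    · filter_upwards [Filter.eventually_ge_atTop j0] with k hk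
      rcases mul_eq_zero.mp hj0 with h1 | h1
      · rw [poch_eq_zero_of_le h1 hk, zero_mul, zero_mul, zero_div]
      · rw [poch_eq_zero_of_le h1 hk, mul_zero, zero_mul, zero_div]
    · exact tendsto_const_nhds
  · push_neg at hz
    have ha : ∀ j, poch a j ≠ 0 := fun j hj => hz j (by rw [hj, zero_mul])
    have hb : ∀ j, poch b j ≠ 0 := fun j hj => hz j (by rw [hj, mul_zero])
    rw [← Filter.tendsto_add_atTop_iff_nat 1]
    set L := Real.Gamma (c+1) / (Real.Gamma a * Real.Gamma b) with hL
    have hQ : Filter.Tendsto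
        (fun n => Real.GammaSeq (c+1) n / (Real.GammaSeq a n * Real.GammaSeq b n))
        Filter.atTop (nhds L) :=
      (Real.GammaSeq_tendsto_Gamma (c+1)).div
        ((Real.GammaSeq_tendsto_Gamma a).mul (Real.GammaSeq_tendsto_Gamma b))
        (mul_ne_zero (gamma_ne_zero_of_poch ha) (gamma_ne_zero_of_poch hb))
    have T1 : Filter.Tendsto (fun n : ℕ => (n:ℝ) ^ (a+b-c)) Filter.atTop (nhds 0) := by
      have : a + b - c = -(c-a-b) := by ring
      rw [this]
      exact (tendsto_rpow_neg_atTop h).comp tendsto_natCast_atTop_atTop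
    have T2 : Filter.Tendsto (fun n : ℕ => (c+(n:ℝ)+1)/n) Filter.atTop (nhds 1) := by
      apply Filter.Tendsto.congr' (f₁ := fun n : ℕ => (c+1)/n + 1)
      · filter_upwards [Filter.eventually_ge_atTop 1] with n hn
        have hn0 : (0:ℝ) < n := by exact_mod_cast hn
        field_simp
        ring
      · have := tendsto_const_div_atTop_nhds_zero_nat (c+1)
        simpa using this.add_const 1
    have main : Filter.Tendsto
        (fun n : ℕ => (n:ℝ) ^ (a+b-c) * ((c+(n:ℝ)+1)/n) *
          (Real.GammaSeq (c+1) n / (Real.GammaSeq a n * Real.GammaSeq b n)))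
        Filter.atTop (nhds 0) := by
      have := (T1.mul T2).mul hQ
      simpa using this
    apply Filter.Tendsto.congr' _ main
    filter_upwards [Filter.eventually_ge_atTop 1] with n hn
    have hn0 : (0:ℝ) < n := by exact_mod_cast hn
    have hc1 : (0:ℝ) < c + 1 := by linarith
    have hkey := key a b (c+1) hc1 hn (ha _) (hb _)
    have hsub : a + b - (c+1) = a+b-c-1 := by ring
    rw [hsub] at hkey
    have expand : poch a (n+1) * poch b (n+1) * (((n+1:ℕ):ℝ) * (c + ((n+1:ℕ):ℝ))) /
          (poch (c+1) (n+1) * ((n+1).factorial : ℝ)) =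
        (poch a (n+1) * poch b (n+1) / (poch (c+1) (n+1) * ((n+1).factorial : ℝ))) *
          (((n:ℝ)+1) * (c+(n:ℝ)+1)) := by
      push_cast
      ring
    rw [expand, hkey]
    rw [Real.rpow_sub hn0 (a+b-c) 1, Real.rpow_one]
    have hn1 : ((n:ℝ)+1) ≠ 0 := by positivity
    have hga := gammaSeq_ne_zero hn (ha (n+1))
    have hgb := gammaSeq_ne_zero hn (hb (n+1))
    have hgc := gammaSeq_ne_zero hn (poch_pos hc1 (n+1)).ne'
    field_simp

lemma termwise (a b c : ℝ) (hc : 0 < c) (j : ℕ) :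
    c * (c-a-b) * (poch a j * poch b j / (poch c j * (Nat.factorial j)))
      - (c-a) * (c-b) * (poch a j * poch b j / (poch (c+1) j * (Nat.factorial j)))
    = poch a j * poch b j * (j * (c + j)) / (poch (c+1) j * (Nat.factorial j))
      - poch a (j+1) * poch b (j+1) * ((j+1 : ℕ) * (c + (j+1 : ℕ))) /
          (poch (c+1) (j+1) * (Nat.factorial (j+1))) := by
  have hc1 : (0:ℝ) < c + 1 := by linarith
  have hR : poch c j ≠ 0 := (poch_pos hc j).ne'
  have hS : poch (c+1) j ≠ 0 := (poch_pos hc1 j).ne'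
  have hcj : c * poch (c+1) j = poch c j * (c + j) := by
    rw [← poch_succ', poch_succ]
  have hf : (Nat.factorial j : ℝ) ≠ 0 := by positivity
  have hcj0 : c + (j:ℝ) ≠ 0 := by positivity
  have hcj1 : c + 1 + (j:ℝ) ≠ 0 := by positivity
  have hS' : poch (c+1) j = poch c j * (c + j) / c := by
    field_simp [← hcj]
    exact hcj
  rw [poch_succ a j, poch_succ b j, poch_succ (c+1) j, Nat.factorial_succ, hS']
  push_cast
  field_simp
  ring

lemma contiguous (a b c : ℝ) (hc : 0 < c) (h : 0 < c - a - b) :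
    c * (c-a-b) * ∑' j : ℕ, poch a j * poch b j / (poch c j * (Nat.factorial j))
      = (c-a) * (c-b) * ∑' j : ℕ, poch a j * poch b j / (poch (c+1) j * (Nat.factorial j)) := by
  set F := fun j : ℕ => poch a j * poch b j / (poch c j * (Nat.factorial j)) with hF
  set F' := fun j : ℕ => poch a j * poch b j / (poch (c+1) j * (Nat.factorial j)) with hF'
  set H := fun j : ℕ => poch a j * poch b j * (j * (c + j)) / (poch (c+1) j * (Nat.factorial j))
    with hH
  have S1 : Summable F := summable_F a b c hc h
  have S2 : Summable F' := summable_F a b (c+1) (by linarith) (by linarith)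
  have heq : (fun j => c*(c-a-b) * F j - (c-a)*(c-b) * F' j) = fun j => H j - H (j+1) := by
    funext j
    have := termwise a b c hc j
    simp only [hF, hF', hH]
    push_cast at this ⊢
    linarith [this]
  have S3 : Summable (fun j => c*(c-a-b) * F j - (c-a)*(c-b) * F' j) :=
    (S1.mul_left _).sub (S2.mul_left _)
  have S4 : Summable (fun j => H j - H (j+1)) := heq ▸ S3
  have htel : ∀ n : ℕ, ∑ j ∈ Finset.range n, (H j - H (j+1)) = H 0 - H n :=
    fun n => Finset.sum_range_sub' H n
  have hH0 : H 0 = 0 := by simp [hH, poch_zero]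
  have hlim : Filter.Tendsto (fun n => ∑ j ∈ Finset.range n, (H j - H (j+1)))
      Filter.atTop (nhds 0) := by
    simp only [htel, hH0, zero_sub]
    have := (tendsto_H a b c hc h).neg
    simpa using this
  have htsum0 : ∑' j, (H j - H (j+1)) = 0 :=
    tendsto_nhds_unique S4.hasSum.tendsto_sum_nat hlim
  have : ∑' j, (c*(c-a-b) * F j - (c-a)*(c-b) * F' j) = 0 := by
    rw [heq]; exact htsum0
  rw [Summable.tsum_sub (S1.mul_left _) (S2.mul_left _), tsum_mul_left, tsum_mul_left] at this
  linarith

lemma iterate (a b c : ℝ) (hc : 0 < c) (h : 0 < c - a - b) (n : ℕ) :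
    (∑' j : ℕ, poch a j * poch b j / (poch c j * (Nat.factorial j)))
        * (poch c n * poch (c-a-b) n)
      = (poch (c-a) n * poch (c-b) n) *
        ∑' j : ℕ, poch a j * poch b j / (poch (c + n) j * (Nat.factorial j)) := by
  induction n with
  | zero => simp [poch_zero]
  | succ n ih =>
    have hcn : (0:ℝ) < c + n := by positivity
    have hcn2 : (0:ℝ) < (c + n) - a - b := by
      have : (0:ℝ) ≤ (n:ℝ) := Nat.cast_nonneg n
      linarith
    have hstep := contiguous a b (c + n) hcn hcn2
    have hcast : (c + (n:ℝ)) + 1 = c + ((n+1 : ℕ):ℝ) := by push_cast; ring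
    rw [hcast] at hstep
    rw [poch_succ c n, poch_succ (c-a-b) n, poch_succ (c-a) n, poch_succ (c-b) n]
    linear_combination ((c+(n:ℝ)) * ((c-a-b)+(n:ℝ))) * ih
      + (poch (c-a) n * poch (c-b) n) * hstep

lemma poch_mul_le {x y : ℝ} (hx : 0 < x) (hxy : x ≤ y) (j : ℕ) :
    y * poch x (j+1) ≤ x * poch y (j+1) := by
  have hy : 0 < y := hx.trans_le hxy
  rw [poch_succ' x j, poch_succ' y j]
  have hp : poch (x+1) j ≤ poch (y+1) j := by
    apply Finset.prod_le_prod
    · intro i _; positivity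
    · intro i _; linarith
  have h0 : (0:ℝ) ≤ poch (x+1) j := (poch_pos (by linarith) j).le
  nlinarith [mul_le_mul_of_nonneg_left hp (mul_nonneg hx.le hy.le)]

lemma tail_tendsto (a b c : ℝ) (hc : 0 < c) (h : 0 < c - a - b) :
    Filter.Tendsto
      (fun n : ℕ => ∑' j : ℕ, poch a j * poch b j / (poch (c + n) j * (Nat.factorial j)))
      Filter.atTop (nhds 1) := by
  set c₀ : ℝ := |a| + |b| + 1 with hc₀def
  have hc₀ : 0 < c₀ := by positivity
  have hG : Summable (fun j : ℕ =>
      poch |a| (j+1) * poch |b| (j+1) / (poch c₀ (j+1) * (Nat.factorial (j+1)))) := by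
    apply (summable_nat_add_iff
      (f := fun j : ℕ => poch |a| j * poch |b| j / (poch c₀ j * (Nat.factorial j))) 1).mpr
    apply summable_F |a| |b| c₀ hc₀
    rw [hc₀def]; linarith
  set T : ℝ := ∑' j : ℕ,
      poch |a| (j+1) * poch |b| (j+1) / (poch c₀ (j+1) * (Nat.factorial (j+1))) with hT
  rw [← tendsto_sub_nhds_zero_iff]
  apply squeeze_zero_norm'
    (a := fun n : ℕ => c₀ * T / (c + n))
  · filter_upwards [Filter.eventually_ge_atTop ⌈c₀⌉₊] with n hn
    have hcn : c₀ ≤ c + n := by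
      have h1 : c₀ ≤ (⌈c₀⌉₊ : ℝ) := Nat.le_ceil c₀
      have h2 : ((⌈c₀⌉₊ : ℕ) : ℝ) ≤ n := Nat.cast_le.mpr hn
      linarith
    have hcnpos : (0:ℝ) < c + n := by positivity
    have hcab : 0 < (c + n) - a - b := by
      have : (0:ℝ) ≤ (n:ℝ) := Nat.cast_nonneg n
      linarith
    have hsum : Summable (fun j : ℕ =>
        poch a j * poch b j / (poch (c + n) j * (Nat.factorial j))) :=
      summable_F a b (c+n) hcnpos hcab
    have hshift : Summable (fun j : ℕ =>
        poch a (j+1) * poch b (j+1) / (poch (c + n) (j+1) * (Nat.factorial (j+1)))) :=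
      (summable_nat_add_iff 1).mpr hsum
    have hzero : ∑' j : ℕ, poch a j * poch b j / (poch (c + n) j * (Nat.factorial j))
        = 1 + ∑' j : ℕ, poch a (j+1) * poch b (j+1) /
            (poch (c + n) (j+1) * (Nat.factorial (j+1))) := by
      rw [Summable.tsum_eq_zero_add hsum]
      simp [poch_zero]
    rw [hzero, add_sub_cancel_left]
    have hterm : ∀ j : ℕ,
        ‖poch a (j+1) * poch b (j+1) / (poch (c + n) (j+1) * (Nat.factorial (j+1)))‖ ≤
          c₀ / (c + n) * (poch |a| (j+1) * poch |b| (j+1) /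
            (poch c₀ (j+1) * (Nat.factorial (j+1)))) := by
      intro j
      have hD : 0 < poch (c+n) (j+1) := poch_pos hcnpos _
      have hD₀ : 0 < poch c₀ (j+1) := poch_pos hc₀ _
      have hk : (0:ℝ) < (Nat.factorial (j+1) : ℝ) := by positivity
      have h1 : |poch a (j+1) * poch b (j+1)| ≤ poch |a| (j+1) * poch |b| (j+1) := by
        rw [abs_mul]
        exact mul_le_mul (abs_poch_le a _) (abs_poch_le b _) (abs_nonneg _)
          ((abs_nonneg _).trans (abs_poch_le a _))
      have h2 : (c+n) * poch c₀ (j+1) ≤ c₀ * poch (c+n) (j+1) := poch_mul_le hc₀ hcn _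
      rw [Real.norm_eq_abs, abs_div, abs_of_pos (mul_pos hD hk), div_mul_div_comm,
        div_le_div_iff₀ (mul_pos hD hk) (mul_pos hcnpos (mul_pos hD₀ hk))]
      have aux : |poch a (j+1) * poch b (j+1)| * ((c+n) * poch c₀ (j+1)) ≤
          (poch |a| (j+1) * poch |b| (j+1)) * (c₀ * poch (c+n) (j+1)) :=
        mul_le_mul h1 h2 (mul_pos hcnpos hD₀).le
          (mul_nonneg (poch_nonneg (abs_nonneg a) _) (poch_nonneg (abs_nonneg b) _))
      calc |poch a (j+1) * poch b (j+1)| * ((c+n) * (poch c₀ (j+1) * (Nat.factorial (j+1))))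
          = (|poch a (j+1) * poch b (j+1)| * ((c+n) * poch c₀ (j+1))) *
              (Nat.factorial (j+1)) := by ring
        _ ≤ ((poch |a| (j+1) * poch |b| (j+1)) * (c₀ * poch (c+n) (j+1))) *
              (Nat.factorial (j+1)) := mul_le_mul_of_nonneg_right aux hk.le
        _ = c₀ * (poch |a| (j+1) * poch |b| (j+1)) *
              (poch (c+n) (j+1) * (Nat.factorial (j+1))) := by ring
    calc ‖∑' j : ℕ, poch a (j+1) * poch b (j+1) /
            (poch (c + n) (j+1) * (Nat.factorial (j+1)))‖
        ≤ ∑' j : ℕ, ‖poch a (j+1) * poch b (j+1) /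
            (poch (c + n) (j+1) * (Nat.factorial (j+1)))‖ := norm_tsum_le_tsum_norm hshift.abs
      _ ≤ ∑' j : ℕ, c₀ / (c + n) * (poch |a| (j+1) * poch |b| (j+1) /
            (poch c₀ (j+1) * (Nat.factorial (j+1)))) :=
          Summable.tsum_le_tsum hterm hshift.abs (hG.mul_left _)
      _ = c₀ / (c + n) * T := tsum_mul_left
      _ = c₀ * T / (c + n) := by ring
  · apply Filter.Tendsto.div_atTop (tendsto_const_nhds)
    apply Filter.tendsto_atTop_add_const_left
    exact tendsto_natCast_atTop_atTop

lemma prefactor_tendsto (a b c : ℝ) (hc : 0 < c) (hcab : 0 < c - a - b)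
    (hca : 0 < c - a) (hcb : 0 < c - b) :
    Filter.Tendsto
      (fun n : ℕ => poch (c-a) n * poch (c-b) n / (poch c n * poch (c-a-b) n))
      Filter.atTop
      (nhds (Real.Gamma c * Real.Gamma (c-a-b) / (Real.Gamma (c-a) * Real.Gamma (c-b)))) := by
  rw [← Filter.tendsto_add_atTop_iff_nat 1]
  have hlim : Filter.Tendsto
      (fun n : ℕ => Real.GammaSeq c n * Real.GammaSeq (c-a-b) n /
        (Real.GammaSeq (c-a) n * Real.GammaSeq (c-b) n)) Filter.atTop
      (nhds (Real.Gamma c * Real.Gamma (c-a-b) / (Real.Gamma (c-a) * Real.Gamma (c-b)))) := by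
    apply Filter.Tendsto.div
      ((Real.GammaSeq_tendsto_Gamma c).mul (Real.GammaSeq_tendsto_Gamma (c-a-b)))
      ((Real.GammaSeq_tendsto_Gamma (c-a)).mul (Real.GammaSeq_tendsto_Gamma (c-b)))
    exact mul_ne_zero (Real.Gamma_pos_of_pos hca).ne' (Real.Gamma_pos_of_pos hcb).ne'
  apply Filter.Tendsto.congr' _ hlim
  filter_upwards [Filter.eventually_ge_atTop 1] with n hn
  have hn0 : (0:ℝ) < n := by exact_mod_cast hn
  have hpc := (poch_pos hc (n+1)).ne'
  have hpcab := (poch_pos hcab (n+1)).ne'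
  have hpca := (poch_pos hca (n+1)).ne'
  have hpcb := (poch_pos hcb (n+1)).ne'
  have hgc := gammaSeq_ne_zero hn hpc
  have hgcab := gammaSeq_ne_zero hn hpcab
  have hgca := gammaSeq_ne_zero hn hpca
  have hgcb := gammaSeq_ne_zero hn hpcb
  have hpow : (n:ℝ)^(c-a) * (n:ℝ)^(c-b) = (n:ℝ)^c * (n:ℝ)^(c-a-b) := by
    rw [← Real.rpow_add hn0, ← Real.rpow_add hn0]
    congr 1; ring
  have hX : (0:ℝ) < (n:ℝ)^c * (n:ℝ)^(c-a-b) * n.factorial * n.factorial := by positivity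
  have e1 : poch (c-a) (n+1) * poch (c-b) (n+1) =
      ((n:ℝ)^c * (n:ℝ)^(c-a-b) * n.factorial * n.factorial) /
        (Real.GammaSeq (c-a) n * Real.GammaSeq (c-b) n) := by
    rw [poch_eq_gammaSeq hn hpca, poch_eq_gammaSeq hn hpcb, div_mul_div_comm]
    congr 1
    linear_combination ((n.factorial : ℝ) * (n.factorial : ℝ)) * hpow
  have e2 : poch c (n+1) * poch (c-a-b) (n+1) =
      ((n:ℝ)^c * (n:ℝ)^(c-a-b) * n.factorial * n.factorial) /
        (Real.GammaSeq c n * Real.GammaSeq (c-a-b) n) := by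
    rw [poch_eq_gammaSeq hn hpc, poch_eq_gammaSeq hn hpcab, div_mul_div_comm]
    congr 1
    ring
  rw [e2, e1]
  rw [div_div_div_comm]
  rw [div_self hX.ne']
  rw [one_div, inv_div]

theorem stmt_13 (a b c : ℝ) (hc : 0 < c) (hcab : 0 < c - a - b)
    (hca : 0 < c - a) (hcb : 0 < c - b) :
    Summable (fun j : ℕ => poch a j * poch b j / (poch c j * (Nat.factorial j))) ∧
    ∑' j : ℕ, poch a j * poch b j / (poch c j * (Nat.factorial j)) =
      Real.Gamma c * Real.Gamma (c - a - b) /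
        (Real.Gamma (c - a) * Real.Gamma (c - b)) := by
  refine ⟨summable_F a b c hc hcab, ?_⟩
  set f : ℝ := ∑' j : ℕ, poch a j * poch b j / (poch c j * (Nat.factorial j)) with hf
  have hconst : ∀ n : ℕ,
      (poch (c-a) n * poch (c-b) n / (poch c n * poch (c-a-b) n)) *
        (∑' j : ℕ, poch a j * poch b j / (poch (c + n) j * (Nat.factorial j))) = f := by
    intro n
    have hpc := (poch_pos hc n).ne'
    have hpcab := (poch_pos hcab n).ne'
    have hit := iterate a b c hc hcab n
    rw [← hf] at hit
    field_simp
    linarith [hit]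
  have hlim : Filter.Tendsto
      (fun n : ℕ => (poch (c-a) n * poch (c-b) n / (poch c n * poch (c-a-b) n)) *
        (∑' j : ℕ, poch a j * poch b j / (poch (c + n) j * (Nat.factorial j))))
      Filter.atTop
      (nhds (Real.Gamma c * Real.Gamma (c-a-b) / (Real.Gamma (c-a) * Real.Gamma (c-b)) * 1)) :=
    (prefactor_tendsto a b c hc hcab hca hcb).mul (tail_tendsto a b c hc hcab)
  have hfconst : Filter.Tendsto
      (fun _ : ℕ => f) Filter.atTop (nhds f) := tendsto_const_nhds
  have := tendsto_nhds_unique (hlim.congr hconst) hfconst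
  rw [← this, mul_one]
end
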